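/- Let X be n×k of rank k and ρ > 0, with K₁ = ρ (X^T Ω^{-1} X)^{-1} and K₂ = ρ (X^T X)^{-1}. Then the residual sums of squares of the two typical shrinkage Bayes linear estimators coincide for all y ∈ ℝⁿ, i.e. (Ω + X K₁ X^T)^{-1} Ω (Ω + X K₁ X^T)^{-1} = (I_n + X K₂ X^T)^{-2}, if and only if Ω = I_n. -/

import Mathlib

open Matrix

private lemma posdef_conj {n k : ℕ} (X : Matrix (Fin n) (Fin k) ℝ)
    (hXinj : ∀ v : Fin k → ℝ, X *ᵥ v = 0 → v = 0)
    (W : Matrix (Fin n) (Fin n) ℝ) (hW : W.PosDef) : (Xᵀ * W * X).PosDef := by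
  rw [posDef_iff_dotProduct_mulVec]
  constructor
  · have h := isHermitian_conjTranspose_mul_mul X hW.isHermitian
    simpa [conjTranspose_eq_transpose_of_trivial] using h
  · intro x hx
    have hXx : X *ᵥ x ≠ 0 := fun h => hx (hXinj x h)
    have := (posDef_iff_dotProduct_mulVec.mp hW).2 hXx
    simpa [star_trivial, ← mulVec_mulVec, dotProduct_mulVec, vecMul_transpose] using this

theorem stmt_17 {n k : ℕ} (hnk : k < n)
    (X : Matrix (Fin n) (Fin k) ℝ) (hX : X.rank = k)
    (Ω : Matrix (Fin n) (Fin n) ℝ) (hΩ : Ω.PosDef)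
    (ρ : ℝ) (hρ : 0 < ρ)
    (K₁ K₂ : Matrix (Fin k) (Fin k) ℝ)
    (hK₁ : K₁ = ρ • (Xᵀ * Ω⁻¹ * X)⁻¹) (hK₂ : K₂ = ρ • (Xᵀ * X)⁻¹) :
    (Ω + X * K₁ * Xᵀ)⁻¹ * Ω * (Ω + X * K₁ * Xᵀ)⁻¹ =
        (1 + X * K₂ * Xᵀ)⁻¹ * (1 + X * K₂ * Xᵀ)⁻¹ ↔ Ω = 1 := by
  -- X has full column rank, hence injective mulVec
  have hXinj : ∀ v : Fin k → ℝ, X *ᵥ v = 0 → v = 0 := by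
    have h := X.mulVecLin.finrank_range_add_finrank_ker
    rw [show Module.finrank ℝ (LinearMap.range X.mulVecLin) = X.rank from rfl, hX,
      Module.finrank_pi, Fintype.card_fin] at h
    have hker : LinearMap.ker X.mulVecLin = ⊥ :=
      Submodule.finrank_eq_zero.mp (by omega)
    intro v hv
    exact (LinearMap.ker_eq_bot.mp hker) (by simpa using hv)
  have hΩdet : IsUnit Ω.det := (isUnit_iff_isUnit_det Ω).mp hΩ.isUnit
  have hΩW : Ω * Ω⁻¹ = 1 := mul_nonsing_inv Ω hΩdet
  have hWΩ : Ω⁻¹ * Ω = 1 := nonsing_inv_mul Ω hΩdet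
  set S := Xᵀ * Ω⁻¹ * X with hSdef
  set T := Xᵀ * X with hTdef
  have hSpos : S.PosDef := posdef_conj X hXinj _ hΩ.inv
  have hTpos : T.PosDef := by
    have := posdef_conj X hXinj 1 Matrix.PosDef.one
    simpa [Matrix.mul_one] using this
  have hSdet : IsUnit S.det := (isUnit_iff_isUnit_det S).mp hSpos.isUnit
  have hTdet : IsUnit T.det := (isUnit_iff_isUnit_det T).mp hTpos.isUnit
  have hSS : S * S⁻¹ = 1 := mul_nonsing_inv S hSdet
  have hSS' : S⁻¹ * S = 1 := nonsing_inv_mul S hSdet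
  have hTT' : T⁻¹ * T = 1 := nonsing_inv_mul T hTdet
  set P := X * S⁻¹ * Xᵀ * Ω⁻¹ with hPdef
  set Q := X * T⁻¹ * Xᵀ with hQdef
  have hcol : ∀ M : Matrix (Fin k) (Fin n) ℝ, Xᵀ * (Ω⁻¹ * (X * M)) = S * M := fun M => by
    rw [hSdef]; simp only [Matrix.mul_assoc]
  have hcolT : ∀ M : Matrix (Fin k) (Fin n) ℝ, Xᵀ * (X * M) = T * M := fun M => by
    rw [hTdef]; simp only [Matrix.mul_assoc]
  have hPP : P * P = P := by
    rw [hPdef]; simp only [Matrix.mul_assoc]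
    rw [hcol, ← Matrix.mul_assoc S⁻¹ S, hSS']; simp
  have hQQ : Q * Q = Q := by
    rw [hQdef]; simp only [Matrix.mul_assoc]
    rw [hcolT, ← Matrix.mul_assoc T⁻¹ T, hTT']; simp
  have hPX : P * X = X := by
    rw [hPdef]; simp only [Matrix.mul_assoc]
    rw [show Xᵀ * (Ω⁻¹ * X) = S from by rw [hSdef]; simp only [Matrix.mul_assoc],
      hSS', Matrix.mul_one]
  have hQX : Q * X = X := by
    rw [hQdef]; simp only [Matrix.mul_assoc]
    rw [show Xᵀ * X = T from hTdef.symm, hTT', Matrix.mul_one]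
  have hPΩ : P * Ω = X * S⁻¹ * Xᵀ := by
    rw [hPdef, Matrix.mul_assoc _ Ω⁻¹ Ω, hWΩ, Matrix.mul_one]
  -- scalars
  set c : ℝ := ρ / (ρ + 1) with hcdef
  have hρ1 : ρ + 1 ≠ 0 := by positivity
  have hρ1' : (1:ℝ) + ρ ≠ 0 := by positivity
  have key : ∀ R : Matrix (Fin n) (Fin n) ℝ, R * R = R →
      (1 + ρ • R) * (1 - c • R) = 1 ∧ (1 - c • R) * (1 + ρ • R) = 1 := by
    intro R hR
    constructor <;>
    · simp only [mul_sub, sub_mul, add_mul, mul_add, one_mul, mul_one,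
        Matrix.smul_mul, Matrix.mul_smul, smul_smul, hR]
      match_scalars <;> (try ring) <;> (rw [hcdef]; field_simp; ring)
  have hsq : ∀ R : Matrix (Fin n) (Fin n) ℝ, R * R = R →
      (1 - c • R) * (1 - c • R) = 1 - (c * 2 - c * c) • R := by
    intro R hR
    simp only [mul_sub, sub_mul, one_mul, mul_one,
      Matrix.smul_mul, Matrix.mul_smul, smul_smul, hR]
    module
  set d : ℝ := c * 2 - c * c with hddef
  -- decompositions of A and B
  have hK1 : X * K₁ * Xᵀ = ρ • (X * S⁻¹ * Xᵀ) := by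
    rw [hK₁]; simp only [Matrix.mul_smul, Matrix.smul_mul]
  have hA : Ω + X * K₁ * Xᵀ = (1 + ρ • P) * Ω := by
    rw [hK1, add_mul, one_mul, Matrix.smul_mul, hPΩ]
  have hB : 1 + X * K₂ * Xᵀ = 1 + ρ • Q := by
    rw [hK₂, hQdef]; simp only [Matrix.mul_smul, Matrix.smul_mul]
  have hAinv : (Ω + X * K₁ * Xᵀ)⁻¹ = Ω⁻¹ * (1 - c • P) := by
    apply inv_eq_right_inv
    rw [hA, Matrix.mul_assoc, ← Matrix.mul_assoc Ω, hΩW, one_mul, (key P hPP).1]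
  have hBinv : (1 + X * K₂ * Xᵀ)⁻¹ = 1 - c • Q := by
    rw [hB]; exact inv_eq_right_inv (key Q hQQ).1
  have hL : (Ω + X * K₁ * Xᵀ)⁻¹ * Ω * (Ω + X * K₁ * Xᵀ)⁻¹
      = Ω⁻¹ * (1 - d • P) := by
    rw [hAinv, Matrix.mul_assoc (Ω⁻¹ * (1 - c • P)) Ω, ← Matrix.mul_assoc Ω, hΩW, one_mul,
      Matrix.mul_assoc, hsq P hPP]
  rw [hL, hBinv, hsq Q hQQ]
  constructor
  · intro h
    have hx : Ω⁻¹ * ((1 - d • P) * X) = (1 - d • Q) * X := by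
      rw [← Matrix.mul_assoc, h]
    simp only [Matrix.sub_mul, Matrix.one_mul, Matrix.smul_mul, hPX, hQX] at hx
    rw [show X - d • X = (1 - d) • X from by module,
      Matrix.mul_smul] at hx
    have hc1 : c < 1 := by rw [hcdef, div_lt_one (by linarith)]; linarith
    have h1d : (1 : ℝ) - d ≠ 0 := by
      have h2 : (1 : ℝ) - d = (1 - c) ^ 2 := by rw [hddef]; ring
      rw [h2]; exact pow_ne_zero _ (by linarith)
    have hWX : Ω⁻¹ * X = X := smul_right_injective _ h1d hx
    have hWs : Ω⁻¹ᵀ = Ω⁻¹ := by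
      rw [← conjTranspose_eq_transpose_of_trivial]; exact hΩ.inv.isHermitian
    have hXW : Xᵀ * Ω⁻¹ = Xᵀ := by
      calc Xᵀ * Ω⁻¹ = (Ω⁻¹ * X)ᵀ := by rw [transpose_mul, hWs]
        _ = Xᵀ := by rw [hWX]
    have hST : S = T := by rw [hSdef, hTdef, hXW]
    have hWP : Ω⁻¹ * P = Q := by
      rw [hPdef, hQdef, hST]
      rw [← Matrix.mul_assoc, ← Matrix.mul_assoc, ← Matrix.mul_assoc, hWX,
        Matrix.mul_assoc (X * T⁻¹) Xᵀ Ω⁻¹, hXW]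
    rw [mul_sub, Matrix.mul_one, Matrix.mul_smul, hWP] at h
    have hW1 : Ω⁻¹ = 1 := by
      have := sub_left_inj.mp h
      exact this
    rw [hW1, Matrix.mul_one] at hΩW
    exact hΩW
  · intro h
    subst h
    have hST : S = T := by rw [hSdef, hTdef, inv_one, Matrix.mul_one]
    rw [inv_one, one_mul, hPdef, hQdef, hST, inv_one, Matrix.mul_one]
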